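/- (Main theorem, (i) ⇒ (iii)) Suppose that for every h1 ∈ H1 and every ε > 0 there exists h2 ∈ H2 with A1 h1 = B1 h2 and ‖A2 h1 − B2 h2‖ ≤ ε. Let Π : H2 → H2 be the orthogonal projection onto ker(B1). Then there exist a continuous linear map D1 : H2 → H1 and a linear map D2 : H2 → H1 (not necessarily continuous) such that A1* = D1 ∘ B1* and A2* = (D1 + D2 ∘ Π) ∘ B2*. -/

import Mathlib

open ContinuousLinearMap

lemma factor_through_linear {K V W U : Type*} [Field K]
    [AddCommGroup V] [Module K V] [AddCommGroup W] [Module K W]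
    [AddCommGroup U] [Module K U]
    (S : V →ₗ[K] W) (T : V →ₗ[K] U) (h : LinearMap.ker S ≤ LinearMap.ker T) :
    ∃ D : W →ₗ[K] U, ∀ x, D (S x) = T x := by
  obtain ⟨q, hq⟩ := Submodule.exists_isCompl (LinearMap.range S)
  let g : LinearMap.range S →ₗ[K] U :=
    (Submodule.liftQ (LinearMap.ker S) T h).comp
      (S.quotKerEquivRange.symm : LinearMap.range S →ₗ[K] _)
  refine ⟨g.comp ((Submodule.linearProjOfIsCompl _ q hq) : W →ₗ[K] LinearMap.range S), ?_⟩
  intro x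
  have h1 : (Submodule.linearProjOfIsCompl _ q hq) (S x)
      = ⟨S x, LinearMap.mem_range_self S x⟩ :=
    Submodule.linearProjOfIsCompl_apply_left hq ⟨S x, LinearMap.mem_range_self S x⟩
  have h2 : S.quotKerEquivRange.symm ⟨S x, LinearMap.mem_range_self S x⟩
      = Submodule.Quotient.mk x := by
    rw [LinearEquiv.symm_apply_eq]
    exact Subtype.ext (S.quotKerEquivRange_apply_mk x).symm
  simp [g, h1, h2]

set_option maxHeartbeats 1600000 in
/-- Main theorem, (i) ⇒ (iii): mixed continuous and non-continuous factorization. -/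
theorem mixed_goal_implies_factorization
    {H1 H2 H4 H5 : Type*}
    [NormedAddCommGroup H1] [InnerProductSpace ℝ H1] [CompleteSpace H1]
    [NormedAddCommGroup H2] [InnerProductSpace ℝ H2] [CompleteSpace H2]
    [NormedAddCommGroup H4] [InnerProductSpace ℝ H4] [CompleteSpace H4]
    [NormedAddCommGroup H5] [InnerProductSpace ℝ H5] [CompleteSpace H5]
    (A1 : H1 →L[ℝ] H4) (A2 : H1 →L[ℝ] H5)
    (B1 : H2 →L[ℝ] H4) (B2 : H2 →L[ℝ] H5)
    (P : H2 →L[ℝ] H2)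
    (hP : P = (LinearMap.ker (B1 : H2 →ₗ[ℝ] H4)).subtypeL.comp (Submodule.orthogonalProjectionOnto (LinearMap.ker (B1 : H2 →ₗ[ℝ] H4))))
    (hgoal : ∀ h1 : H1, ∀ ε : ℝ, 0 < ε →
      ∃ h2 : H2, A1 h1 = B1 h2 ∧ ‖A2 h1 - B2 h2‖ ≤ ε) :
    ∃ (D1 : H2 →L[ℝ] H1) (D2 : H2 →ₗ[ℝ] H1),
      (∀ h4 : H4, adjoint A1 h4 = D1 (adjoint B1 h4)) ∧
      (∀ h5 : H5, adjoint A2 h5 = D1 (adjoint B2 h5) + D2 (P (adjoint B2 h5))) := by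
  set K : Submodule ℝ H2 := LinearMap.ker (B1 : H2 →ₗ[ℝ] H4) with hK
  -- existence and uniqueness of the minimal-norm preimage
  have hex : ∀ h1 : H1, ∃ y : H2, y ∈ Kᗮ ∧ B1 y = A1 h1 := by
    intro h1
    obtain ⟨h2, hB, -⟩ := hgoal h1 1 one_pos
    refine ⟨h2 - (K.orthogonalProjectionOnto h2 : H2), ?_, ?_⟩
    · exact Submodule.sub_starProjection_mem_orthogonal h2
    · have hm : ((K.orthogonalProjectionOnto h2 : H2)) ∈ K := (K.orthogonalProjectionOnto h2).2
      have : B1 (K.orthogonalProjectionOnto h2 : H2) = 0 := hm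
      rw [map_sub, this, sub_zero, hB]
  choose C hCmem hCB using hex
  have huniq : ∀ y z : H2, y ∈ Kᗮ → z ∈ Kᗮ → B1 y = B1 z → y = z := by
    intro y z hy hz hB
    have h1 : y - z ∈ K := by
      simp only [hK, LinearMap.mem_ker, map_sub, ContinuousLinearMap.coe_coe, hB, sub_self]
    have h2 : y - z ∈ Kᗮ := Submodule.sub_mem _ hy hz
    have h3 : (inner ℝ (y - z) (y - z) : ℝ) = 0 := h2 (y - z) h1
    exact sub_eq_zero.mp (inner_self_eq_zero.mp h3)
  -- linearity of C
  have hadd : ∀ x y : H1, C (x + y) = C x + C y := by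
    intro x y
    exact huniq _ _ (hCmem _) (Submodule.add_mem _ (hCmem x) (hCmem y))
      (by rw [hCB, map_add, map_add, hCB, hCB])
  have hsmul : ∀ (c : ℝ) (x : H1), C (c • x) = c • C x := by
    intro c x
    exact huniq _ _ (hCmem _) (Submodule.smul_mem _ c (hCmem x))
      (by rw [hCB, map_smul, map_smul, hCB])
  let Clin : H1 →ₗ[ℝ] H2 :=
    { toFun := C, map_add' := hadd, map_smul' := hsmul }
  -- continuity via the closed graph theorem
  have hcont : Continuous Clin := by
    apply LinearMap.continuous_of_seq_closed_graph
    intro u x y hu hy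
    have hymem : y ∈ Kᗮ :=
      K.isClosed_orthogonal.mem_of_tendsto hy
        (Filter.Eventually.of_forall fun n => hCmem (u n))
    have t1 : Filter.Tendsto (fun n => B1 (Clin (u n))) Filter.atTop (nhds (B1 y)) :=
      (B1.continuous.tendsto y).comp hy
    have t2 : Filter.Tendsto (fun n => A1 (u n)) Filter.atTop (nhds (A1 x)) :=
      (A1.continuous.tendsto x).comp hu
    have t1' : Filter.Tendsto (fun n => A1 (u n)) Filter.atTop (nhds (B1 y)) := by
      simpa only [show (fun n => B1 (Clin (u n))) = fun n => A1 (u n) from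
        funext fun n => hCB (u n)] using t1
    have hBy : B1 y = A1 x := tendsto_nhds_unique t1' t2
    exact huniq y (C x) hymem (hCmem x) (by rw [hBy, hCB])
  let Ccl : H1 →L[ℝ] H2 := ⟨Clin, hcont⟩
  have hA1 : A1 = B1.comp Ccl := by
    ext h1
    exact (hCB h1).symm
  refine ⟨adjoint Ccl, ?_⟩
  -- the second factor
  set T : H5 →ₗ[ℝ] H1 :=
    ((adjoint A2 - (adjoint Ccl).comp (adjoint B2) : H5 →L[ℝ] H1) : H5 →ₗ[ℝ] H1) with hT
  set S : H5 →ₗ[ℝ] H2 := ((P.comp (adjoint B2) : H5 →L[ℝ] H2) : H5 →ₗ[ℝ] H2) with hS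
  have hker : LinearMap.ker S ≤ LinearMap.ker T := by
    intro h5 hS5
    have hS5' : P (adjoint B2 h5) = 0 := hS5
    have horth : adjoint B2 h5 ∈ Kᗮ := by
      have := Submodule.sub_starProjection_mem_orthogonal (K := K) (adjoint B2 h5)
      have hP5 : (K.orthogonalProjectionOnto (adjoint B2 h5) : H2) = 0 := by
        have : P (adjoint B2 h5)
            = (K.orthogonalProjectionOnto (adjoint B2 h5) : H2) := by rw [hP]; rfl
        rw [← this, hS5']
      rw [Submodule.starProjection_apply, hP5, sub_zero] at this
      exact this
    have hinner : ∀ h1 : H1,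
        (inner ℝ (adjoint A2 h5 - adjoint Ccl (adjoint B2 h5)) h1 : ℝ) = 0 := by
      intro h1
      have hval : (inner ℝ (adjoint A2 h5 - adjoint Ccl (adjoint B2 h5)) h1 : ℝ)
          = inner ℝ h5 (A2 h1 - B2 (C h1)) := by
        rw [inner_sub_left, adjoint_inner_left, adjoint_inner_left, adjoint_inner_left,
          inner_sub_right]
        rfl
      rw [hval]
      set r : ℝ := inner ℝ h5 (A2 h1 - B2 (C h1)) with hr
      have hsmall : ∀ ε : ℝ, 0 < ε → |r| ≤ ε := by
        intro ε hε
        have hδ : 0 < ε / (‖h5‖ + 1) := by positivity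
        obtain ⟨h2, hB, hN⟩ := hgoal h1 (ε / (‖h5‖ + 1)) hδ
        have hk : h2 - C h1 ∈ K := by
          simp only [hK, LinearMap.mem_ker, map_sub, ContinuousLinearMap.coe_coe, hCB, ← hB, sub_self]
        have hsplit : A2 h1 - B2 (C h1) = (A2 h1 - B2 h2) + B2 (h2 - C h1) := by
          rw [map_sub]; abel
        have hzero : (inner ℝ h5 (B2 (h2 - C h1)) : ℝ) = 0 := by
          rw [← adjoint_inner_left]
          rw [real_inner_comm]
          exact horth (h2 - C h1) hk
        have : r = inner ℝ h5 (A2 h1 - B2 h2) := by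
          rw [hr, hsplit, inner_add_right, hzero, add_zero]
        rw [this]
        calc |(inner ℝ h5 (A2 h1 - B2 h2) : ℝ)| ≤ ‖h5‖ * ‖A2 h1 - B2 h2‖ :=
              abs_real_inner_le_norm _ _
          _ ≤ ‖h5‖ * (ε / (‖h5‖ + 1)) := by
              apply mul_le_mul_of_nonneg_left hN (norm_nonneg _)
          _ ≤ (‖h5‖ + 1) * (ε / (‖h5‖ + 1)) := by
              apply mul_le_mul_of_nonneg_right (by linarith) (le_of_lt hδ)
          _ = ε := by field_simp
      have habs : |r| ≤ 0 := by
        apply le_of_forall_pos_le_add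
        intro ε hε
        simpa using hsmall ε hε
      exact abs_nonpos_iff.mp habs |>.symm ▸ rfl
    have hzero : adjoint A2 h5 - adjoint Ccl (adjoint B2 h5) = 0 := by
      have := hinner (adjoint A2 h5 - adjoint Ccl (adjoint B2 h5))
      exact inner_self_eq_zero.mp this
    simpa [hT] using hzero
  obtain ⟨D2, hD2⟩ := factor_through_linear S T hker
  refine ⟨D2, ?_, ?_⟩
  · intro h4
    rw [hA1, adjoint_comp]
    rfl
  · intro h5
    have := hD2 h5
    have hSh5 : S h5 = P (adjoint B2 h5) := rfl
    have hTh5 : T h5 = adjoint A2 h5 - adjoint Ccl (adjoint B2 h5) := by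
      rw [hT]; simp
    rw [hSh5, hTh5] at this
    exact sub_eq_iff_eq_add'.mp this.symm
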